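/- arXiv:2509.24005 — 2 statements merged into one kernel-verified Lean document; each statement's English description precedes it below -/
import Mathlib

section
/- Let p ≥ 2, σ > 0, μ ∈ ℝ^{p-1}, and η_t, η_ℓ ∈ ℝ. With C(η) = [[1, η μᵀ], [η μ, σ² I_{p-1} + η² μ μᵀ]], one has tr(C(η_t) C(η_ℓ)^{-1}) = p + (η_t − η_ℓ)² ‖μ‖² / σ². -/
open Matrix

/-- For `p = k+1 ≥ 2`, `σ > 0`, `μ ∈ ℝ^{p-1}`, and `η_t, η_ℓ ∈ ℝ`,
`tr(C(η_t) C(η_ℓ)⁻¹) = p + (η_t − η_ℓ)² ‖μ‖² / σ²` where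
`C(η) = [[1, ημᵀ],[ημ, σ²I + η²μμᵀ]]`. -/
theorem trace_C_mul_C_inv
    (k : ℕ) (hk : 1 ≤ k) (σ : ℝ) (hσ : 0 < σ) (μ : Fin k → ℝ) (ηt ηl : ℝ) :
    let C : ℝ → Matrix (Fin 1 ⊕ Fin k) (Fin 1 ⊕ Fin k) ℝ := fun η =>
      Matrix.fromBlocks (Matrix.of fun _ _ => 1) (Matrix.of fun _ j => η * μ j)
        (Matrix.of fun i _ => η * μ i)
        (σ ^ 2 • (1 : Matrix (Fin k) (Fin k) ℝ) + η ^ 2 • Matrix.vecMulVec μ μ)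
    Matrix.trace (C ηt * (C ηl)⁻¹) = (k + 1 : ℝ) + (ηt - ηl) ^ 2 * (μ ⬝ᵥ μ) / σ ^ 2 := by
  intro C
  have hσ2 : (σ : ℝ) ^ 2 ≠ 0 := pow_ne_zero _ hσ.ne'
  set B : Matrix (Fin 1 ⊕ Fin k) (Fin 1 ⊕ Fin k) ℝ :=
    Matrix.fromBlocks (Matrix.of fun _ _ => 1 + ηl ^ 2 * (μ ⬝ᵥ μ) / σ ^ 2)
      (Matrix.of fun _ j => -(ηl * μ j) / σ ^ 2)
      (Matrix.of fun i _ => -(ηl * μ i) / σ ^ 2)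
      ((σ ^ 2)⁻¹ • (1 : Matrix (Fin k) (Fin k) ℝ)) with hBdef
  have hB : C ηl * B = 1 := by
    ext i j
    rcases i with i | i <;> rcases j with j | j <;>
      simp only [C, hBdef, Matrix.mul_apply, Fintype.sum_sum_type, Matrix.fromBlocks_apply₁₁,
        Matrix.fromBlocks_apply₁₂, Matrix.fromBlocks_apply₂₁, Matrix.fromBlocks_apply₂₂,
        Matrix.of_apply, Matrix.add_apply, Matrix.smul_apply, Matrix.one_apply,
        Matrix.vecMulVec_apply, smul_eq_mul, dotProduct, Fin.sum_univ_one,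
        Sum.inl.injEq, Sum.inr.injEq, mul_ite, ite_mul, mul_zero, zero_mul, mul_one, one_mul,
        Finset.sum_ite_eq, Finset.sum_ite_eq', Finset.mem_univ, if_true, reduceCtorEq, if_false, ite_false]
    · have s1 : ∑ x : Fin k, ηl * μ x * (-(ηl * μ x) / σ ^ 2)
          = (-(ηl ^ 2) / σ ^ 2) * ∑ x : Fin k, μ x * μ x := by
        rw [Finset.mul_sum]; exact Finset.sum_congr rfl fun x _ => by ring
      rw [s1, if_pos (Subsingleton.elim i j)]
      field_simp
      ring
    · field_simp
      ring
    · have s2 : ∑ x : Fin k, ((if i = x then σ ^ 2 else 0) + ηl ^ 2 * (μ i * μ x)) * (-(ηl * μ x) / σ ^ 2)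
          = σ ^ 2 * (-(ηl * μ i) / σ ^ 2) + (-(ηl ^ 3 * μ i) / σ ^ 2) * ∑ x : Fin k, μ x * μ x := by
        simp only [add_mul, ite_mul, zero_mul, Finset.sum_add_distrib, Finset.sum_ite_eq,
          Finset.mem_univ, if_true, Finset.mul_sum]
        congr 1
        exact Finset.sum_congr rfl fun x _ => by ring
      rw [s2]
      field_simp
      ring
    · by_cases hij : i = j
      · rw [if_pos hij, if_pos hij, hij]
        field_simp
        ring
      · rw [if_neg hij, if_neg hij]
        field_simp
        ring
  have hinv : (C ηl)⁻¹ = B := Matrix.inv_eq_right_inv hB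
  rw [hinv]
  simp only [C, hBdef, Matrix.trace, Matrix.diag, Matrix.mul_apply, Fintype.sum_sum_type,
    Matrix.fromBlocks_apply₁₁, Matrix.fromBlocks_apply₁₂, Matrix.fromBlocks_apply₂₁,
    Matrix.fromBlocks_apply₂₂, Matrix.of_apply, Matrix.add_apply, Matrix.smul_apply,
    Matrix.one_apply, Matrix.vecMulVec_apply, smul_eq_mul, dotProduct, Fin.sum_univ_one,
    mul_ite, ite_mul, mul_zero, zero_mul, mul_one, one_mul,
    Finset.sum_ite_eq, Finset.sum_ite_eq', Finset.mem_univ, if_true]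
  have s3 : ∑ x : Fin k, ηt * μ x * (-(ηl * μ x) / σ ^ 2)
      = (-(ηt * ηl) / σ ^ 2) * ∑ x : Fin k, μ x * μ x := by
    rw [Finset.mul_sum]; exact Finset.sum_congr rfl fun x _ => by ring
  have s4 : ∑ x : Fin k, (ηt * μ x * (-(ηl * μ x) / σ ^ 2) + (σ ^ 2 + ηt ^ 2 * (μ x * μ x)) * (σ ^ 2)⁻¹)
      = (k : ℝ) + ((ηt ^ 2 - ηt * ηl) / σ ^ 2) * ∑ x : Fin k, μ x * μ x := by
    have : ∀ x ∈ Finset.univ, (ηt * μ x * (-(ηl * μ x) / σ ^ 2) + (σ ^ 2 + ηt ^ 2 * (μ x * μ x)) * (σ ^ 2)⁻¹)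
        = 1 + ((ηt ^ 2 - ηt * ηl) / σ ^ 2) * (μ x * μ x) := fun x _ => by
      field_simp; ring
    rw [Finset.sum_congr rfl this, Finset.sum_add_distrib, ← Finset.mul_sum]
    simp [Finset.card_univ]
  rw [s3, s4]
  field_simp
  ring
end

section
/- Let p ≥ 2, σ > 0, μ_T ∈ ℝ^{p_T−1}, μ_S ∈ ℝ^{p_S−1}, Ξ ∈ ℝ^{(p_T−1)×(p_S−1)}, and η_ℓ, η_u, η_t ∈ ℝ. Define C_T(η) = [[1, η μ_Tᵀ],[η μ_T, σ² I + η² μ_T μ_Tᵀ]] ∈ ℝ^{p_T×p_T}, C_S(η) = [[1, η μ_Sᵀ],[η μ_S, σ² I + η² μ_S μ_Sᵀ]] ∈ ℝ^{p_S×p_S}, and the cross matrix A(η) = [[1, η μ_Tᵀ],[η μ_S, σ² Ξᵀ + η² μ_S μ_Tᵀ]] ∈ ℝ^{p_S×p_T} (where Ξᵀ = Sᵀ T). Then tr( A(η_u)ᵀ C_S(η_u)^{-1} C_S(η_t) C_S(η_u)^{-1} A(η_u) · C_T(η_ℓ)^{-1} ) = 1 + ‖Ξ‖_F² + ‖(η_u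 − η_ℓ) μ_T + (η_t − η_u) Ξ μ_S‖² / σ². -/
open Matrix

namespace W2SAux

variable {n m k : ℕ}

def rV (u : Fin n → ℝ) : Matrix (Fin 1) (Fin n) ℝ := Matrix.of fun _ j => u j
def cV (u : Fin n → ℝ) : Matrix (Fin n) (Fin 1) ℝ := Matrix.of fun i _ => u i
def sc (a : ℝ) : Matrix (Fin 1) (Fin 1) ℝ := Matrix.of fun _ _ => a

@[simp] lemma rV_mul (u : Fin n → ℝ) (M : Matrix (Fin n) (Fin m) ℝ) :
    rV u * M = rV (u ᵥ* M) := by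
  ext i j; simp [rV, Matrix.mul_apply, Matrix.vecMul, dotProduct]

@[simp] lemma mul_cV (M : Matrix (Fin m) (Fin n) ℝ) (u : Fin n → ℝ) :
    M * cV u = cV (M *ᵥ u) := by
  ext i j; simp [cV, Matrix.mul_apply, Matrix.mulVec, dotProduct]

@[simp] lemma rV_mul_cV (u v : Fin n → ℝ) : rV u * cV v = sc (u ⬝ᵥ v) := by
  ext i j; simp [rV, cV, sc, Matrix.mul_apply, dotProduct]

@[simp] lemma cV_mul_rV (u : Fin n → ℝ) (v : Fin m → ℝ) :
    cV u * rV v = vecMulVec u v := by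
  ext i j; simp [rV, cV, Matrix.mul_apply, Matrix.vecMulVec_apply]

@[simp] lemma sc_mul_sc (a b : ℝ) : sc a * sc b = sc (a * b) := by
  ext i j; simp [sc, Matrix.mul_apply]

@[simp] lemma sc_mul_rV (a : ℝ) (u : Fin n → ℝ) : sc a * rV u = rV (a • u) := by
  ext i j; simp [sc, rV, Matrix.mul_apply]

@[simp] lemma cV_mul_sc (u : Fin n → ℝ) (a : ℝ) : cV u * sc a = cV (a • u) := by
  ext i j; simp [sc, cV, Matrix.mul_apply, mul_comm]

@[simp] lemma mul_vecMulVec (M : Matrix (Fin m) (Fin n) ℝ) (u : Fin n → ℝ)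
    (v : Fin k → ℝ) : M * vecMulVec u v = vecMulVec (M *ᵥ u) v := by
  ext i j
  simp [Matrix.mul_apply, Matrix.vecMulVec_apply, Matrix.mulVec, dotProduct,
    Finset.sum_mul, mul_assoc]

@[simp] lemma vecMulVec_mul (u : Fin k → ℝ) (v : Fin m → ℝ)
    (M : Matrix (Fin m) (Fin n) ℝ) : vecMulVec u v * M = vecMulVec u (v ᵥ* M) := by
  ext i j
  simp [Matrix.mul_apply, Matrix.vecMulVec_apply, Matrix.vecMul, dotProduct,
    Finset.mul_sum, mul_assoc]

@[simp] lemma vecMulVec_mul_cV (u : Fin m → ℝ) (v w : Fin n → ℝ) :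
    vecMulVec u v * cV w = cV ((v ⬝ᵥ w) • u) := by
  ext i j
  simp [Matrix.mul_apply, Matrix.vecMulVec_apply, cV, dotProduct,
    Finset.mul_sum, mul_assoc, mul_comm, mul_left_comm]

@[simp] lemma rV_mul_vecMulVec (u v : Fin n → ℝ) (w : Fin m → ℝ) :
    rV u * vecMulVec v w = rV ((u ⬝ᵥ v) • w) := by
  ext i j
  simp [Matrix.mul_apply, Matrix.vecMulVec_apply, rV, dotProduct,
    Finset.sum_mul, mul_assoc]

@[simp] lemma vecMulVec_mulVec (u : Fin m → ℝ) (v w : Fin n → ℝ) :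
    vecMulVec u v *ᵥ w = (v ⬝ᵥ w) • u := by
  ext i
  simp [Matrix.mulVec, Matrix.vecMulVec_apply, dotProduct, Finset.mul_sum,
    mul_assoc, mul_comm, mul_left_comm]

@[simp] lemma vecMul_vecMulVec (u v : Fin m → ℝ) (w : Fin n → ℝ) :
    u ᵥ* vecMulVec v w = (u ⬝ᵥ v) • w := by
  ext j
  simp [Matrix.vecMul, Matrix.vecMulVec_apply, dotProduct, Finset.sum_mul,
    mul_assoc]

@[simp] lemma smul_rV (a : ℝ) (u : Fin n → ℝ) : a • rV u = rV (a • u) := by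
  ext i j; simp [rV]

@[simp] lemma smul_cV (a : ℝ) (u : Fin n → ℝ) : a • cV u = cV (a • u) := by
  ext i j; simp [cV]

@[simp] lemma smul_sc (a b : ℝ) : a • sc b = sc (a * b) := by
  ext i j; simp [sc]

@[simp] lemma rV_add (u v : Fin n → ℝ) : rV u + rV v = rV (u + v) := by
  ext i j; simp [rV]

@[simp] lemma cV_add (u v : Fin n → ℝ) : cV u + cV v = cV (u + v) := by
  ext i j; simp [cV]

@[simp] lemma sc_add (a b : ℝ) : sc a + sc b = sc (a + b) := by
  ext i j; simp [sc]

@[simp] lemma trace_sc (a : ℝ) : Matrix.trace (sc a) = a := by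
  simp [Matrix.trace, sc, Matrix.diag]

@[simp] lemma trace_vecMulVec (u v : Fin n → ℝ) :
    Matrix.trace (vecMulVec u v) = u ⬝ᵥ v := by
  simp [Matrix.trace, Matrix.vecMulVec_apply, Matrix.diag, dotProduct]

@[simp] lemma rV_transpose (u : Fin n → ℝ) : (rV u)ᵀ = cV u := by
  ext i j; simp [rV, cV]

@[simp] lemma cV_transpose (u : Fin n → ℝ) : (cV u)ᵀ = rV u := by
  ext i j; simp [rV, cV]

@[simp] lemma sc_transpose (a : ℝ) : (sc a)ᵀ = sc a := by
  ext i j; simp [sc]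

@[simp] lemma vecMulVec_transpose (u : Fin n → ℝ) (v : Fin m → ℝ) :
    (vecMulVec u v)ᵀ = vecMulVec v u := by
  ext i j; simp [Matrix.vecMulVec_apply, mul_comm]

@[simp] lemma trace_fromBlocks' (A : Matrix (Fin 1) (Fin 1) ℝ)
    (B : Matrix (Fin 1) (Fin n) ℝ) (C : Matrix (Fin n) (Fin 1) ℝ)
    (D : Matrix (Fin n) (Fin n) ℝ) :
    Matrix.trace (Matrix.fromBlocks A B C D) = Matrix.trace A + Matrix.trace D := by
  simp [Matrix.trace, Fintype.sum_sum_type, Matrix.fromBlocks, Matrix.diag]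

lemma trace_mul_self_transpose (Ξ : Matrix (Fin n) (Fin m) ℝ) :
    Matrix.trace (Ξ * Ξᵀ) = ∑ i, ∑ j, Ξ i j ^ 2 := by
  simp [Matrix.trace, Matrix.mul_apply, Matrix.diag, sq]

@[simp] lemma smul_vecMul_assoc (a : ℝ) (v : Fin n → ℝ) (M : Matrix (Fin n) (Fin m) ℝ) :
    v ᵥ* (a • M) = a • (v ᵥ* M) := by
  ext j
  simp [Matrix.vecMul, dotProduct, Finset.mul_sum, mul_comm, mul_left_comm]

@[simp] lemma rV_mulVec (u w : Fin n → ℝ) : rV u *ᵥ w = fun _ => u ⬝ᵥ w := by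
  funext i; simp [rV, Matrix.mulVec, dotProduct]

@[simp] lemma vecMul_cV (w u : Fin n → ℝ) : w ᵥ* cV u = fun _ => w ⬝ᵥ u := by
  funext i; simp [cV, Matrix.vecMul, dotProduct]

@[simp] lemma cV_mulVec (u : Fin n → ℝ) (w : Fin 1 → ℝ) : cV u *ᵥ w = w 0 • u := by
  funext i; simp [cV, Matrix.mulVec, dotProduct, mul_comm]

@[simp] lemma vecMul_rV (w : Fin 1 → ℝ) (u : Fin n → ℝ) : w ᵥ* rV u = w 0 • u := by
  funext i; simp [rV, Matrix.vecMul, dotProduct]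

@[simp] lemma sc_mulVec (a : ℝ) (w : Fin 1 → ℝ) : sc a *ᵥ w = fun _ => a * w 0 := by
  funext i; simp [sc, Matrix.mulVec, dotProduct]

@[simp] lemma vecMul_sc (w : Fin 1 → ℝ) (a : ℝ) : w ᵥ* sc a = fun _ => w 0 * a := by
  funext i; simp [sc, Matrix.vecMul, dotProduct]

@[simp] lemma trace_cV (v : Fin 1 → ℝ) : Matrix.trace (cV v) = v 0 := by
  simp [Matrix.trace, cV, Matrix.diag]

@[simp] lemma trace_rV (v : Fin 1 → ℝ) : Matrix.trace (rV v) = v 0 := by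
  simp [Matrix.trace, rV, Matrix.diag]

@[simp] lemma dotProduct_fin_one (x y : Fin 1 → ℝ) : x ⬝ᵥ y = x 0 * y 0 := by
  simp [dotProduct]

lemma sc_eq_one {a : ℝ} (h : a = 1) : sc a = 1 := by
  subst h; ext i j; fin_cases i; fin_cases j; simp [sc]

lemma rV_eq_zero {u : Fin n → ℝ} (h : u = 0) : rV u = 0 := by
  subst h; ext i j; simp [rV]

lemma cV_eq_zero {u : Fin n → ℝ} (h : u = 0) : cV u = 0 := by
  subst h; ext i j; simp [cV]

/-- explicit inverse of the group second-moment matrix -/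
lemma Cinv_eq (σ η : ℝ) (hσ : σ ≠ 0) (μ : Fin n → ℝ) :
    (Matrix.fromBlocks (sc 1) (rV (η • μ)) (cV (η • μ))
        (σ ^ 2 • (1 : Matrix (Fin n) (Fin n) ℝ) + η ^ 2 • vecMulVec μ μ))⁻¹ =
      Matrix.fromBlocks (sc (1 + η ^ 2 * (μ ⬝ᵥ μ) / σ ^ 2)) (rV ((-(η / σ ^ 2)) • μ))
        (cV ((-(η / σ ^ 2)) • μ)) ((σ ^ 2)⁻¹ • (1 : Matrix (Fin n) (Fin n) ℝ)) := by
  have hσ2 : σ ^ 2 ≠ 0 := pow_ne_zero _ hσ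
  apply Matrix.inv_eq_right_inv
  rw [Matrix.fromBlocks_multiply, ← Matrix.fromBlocks_one]
  refine Matrix.fromBlocks_inj.mpr ⟨?_, ?_, ?_, ?_⟩
  · simp only [sc_mul_sc, rV_mul_cV, sc_add, smul_dotProduct, dotProduct_smul]
    apply sc_eq_one
    field_simp
    have h1 : σ ^ 2 * σ⁻¹ ^ 2 = 1 := by rw [← mul_pow, mul_inv_cancel₀ hσ, one_pow]
    linear_combination (-(η ^ 2 * μ ⬝ᵥ μ)) * h1
  · simp only [sc_mul_rV, rV_mul, Matrix.vecMul_add, Matrix.vecMul_smul,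
      Matrix.vecMul_one, vecMul_vecMulVec, smul_dotProduct, dotProduct_smul, rV_add]
    apply rV_eq_zero
    funext j
    simp only [Pi.add_apply, Pi.smul_apply, Pi.zero_apply, smul_eq_mul]
    field_simp
    ring
  · simp only [cV_mul_sc, mul_cV, Matrix.add_mulVec, smul_mulVec,
      Matrix.one_mulVec, vecMulVec_mulVec, Matrix.mulVec_smul, smul_dotProduct,
      dotProduct_smul, cV_add, smul_smul]
    apply cV_eq_zero
    funext j
    simp only [Pi.add_apply, Pi.smul_apply, Pi.zero_apply, smul_eq_mul]
    field_simp
    ring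
  · ext i j
    simp only [Matrix.add_apply, Matrix.smul_apply, cV, rV, Matrix.mul_apply,
      Matrix.vecMulVec_apply, Matrix.one_apply, Matrix.smul_mul, Matrix.mul_smul,
      Matrix.mul_one, smul_eq_mul, Fintype.sum_sum_type]
    simp only [Fin.sum_univ_one, Matrix.of_apply, Pi.smul_apply, smul_eq_mul]
    split_ifs with h <;> field_simp <;> ring

end W2SAux

open W2SAux

set_option maxHeartbeats 1000000 in
/-- With `C_T(η)`, `C_S(η)` the teacher/student group second-moment
matrices and `A(η)` the cross matrix (bottom-right block `σ²Ξᵀ + η²μ_Sμ_Tᵀ`), one has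
`tr(A(η_u)ᵀ C_S(η_u)⁻¹ C_S(η_t) C_S(η_u)⁻¹ A(η_u) C_T(η_ℓ)⁻¹)
  = 1 + ‖Ξ‖_F² + ‖(η_u − η_ℓ)μ_T + (η_t − η_u)Ξμ_S‖²/σ²`. -/
theorem w2s_dominant_trace_identity
    (t s : ℕ) (ht : 1 ≤ t) (hs : 1 ≤ s) (σ : ℝ) (hσ : 0 < σ)
    (μT : Fin t → ℝ) (μS : Fin s → ℝ) (Ξ : Matrix (Fin t) (Fin s) ℝ)
    (ηl ηu ηt : ℝ) :
    let CT : ℝ → Matrix (Fin 1 ⊕ Fin t) (Fin 1 ⊕ Fin t) ℝ := fun η =>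
      Matrix.fromBlocks (Matrix.of fun _ _ => 1) (Matrix.of fun _ j => η * μT j)
        (Matrix.of fun i _ => η * μT i)
        (σ ^ 2 • (1 : Matrix (Fin t) (Fin t) ℝ) + η ^ 2 • Matrix.vecMulVec μT μT)
    let CS : ℝ → Matrix (Fin 1 ⊕ Fin s) (Fin 1 ⊕ Fin s) ℝ := fun η =>
      Matrix.fromBlocks (Matrix.of fun _ _ => 1) (Matrix.of fun _ j => η * μS j)
        (Matrix.of fun i _ => η * μS i)
        (σ ^ 2 • (1 : Matrix (Fin s) (Fin s) ℝ) + η ^ 2 • Matrix.vecMulVec μS μS)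
    let A : ℝ → Matrix (Fin 1 ⊕ Fin s) (Fin 1 ⊕ Fin t) ℝ := fun η =>
      Matrix.fromBlocks (Matrix.of fun _ _ => 1) (Matrix.of fun _ j => η * μT j)
        (Matrix.of fun i _ => η * μS i)
        (σ ^ 2 • Ξᵀ + η ^ 2 • Matrix.vecMulVec μS μT)
    let v : Fin t → ℝ := fun i => (ηu - ηl) * μT i + (ηt - ηu) * (Ξ *ᵥ μS) i
    Matrix.trace ((A ηu)ᵀ * (CS ηu)⁻¹ * CS ηt * (CS ηu)⁻¹ * A ηu * (CT ηl)⁻¹)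
      = 1 + (∑ i, ∑ j, Ξ i j ^ 2) + (v ⬝ᵥ v) / σ ^ 2 := by
  intro CT CS A v
  have hσ2 : σ ^ 2 ≠ 0 := pow_ne_zero _ hσ.ne'
  show Matrix.trace
      ((Matrix.fromBlocks (sc 1) (rV (ηu • μT)) (cV (ηu • μS))
          (σ ^ 2 • Ξᵀ + ηu ^ 2 • Matrix.vecMulVec μS μT))ᵀ *
        (Matrix.fromBlocks (sc 1) (rV (ηu • μS)) (cV (ηu • μS))
          (σ ^ 2 • (1 : Matrix (Fin s) (Fin s) ℝ) + ηu ^ 2 • Matrix.vecMulVec μS μS))⁻¹ *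
        Matrix.fromBlocks (sc 1) (rV (ηt • μS)) (cV (ηt • μS))
          (σ ^ 2 • (1 : Matrix (Fin s) (Fin s) ℝ) + ηt ^ 2 • Matrix.vecMulVec μS μS) *
        (Matrix.fromBlocks (sc 1) (rV (ηu • μS)) (cV (ηu • μS))
          (σ ^ 2 • (1 : Matrix (Fin s) (Fin s) ℝ) + ηu ^ 2 • Matrix.vecMulVec μS μS))⁻¹ *
        Matrix.fromBlocks (sc 1) (rV (ηu • μT)) (cV (ηu • μS))
          (σ ^ 2 • Ξᵀ + ηu ^ 2 • Matrix.vecMulVec μS μT) *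
        (Matrix.fromBlocks (sc 1) (rV (ηl • μT)) (cV (ηl • μT))
          (σ ^ 2 • (1 : Matrix (Fin t) (Fin t) ℝ) + ηl ^ 2 • Matrix.vecMulVec μT μT))⁻¹)
      = 1 + (∑ i, ∑ j, Ξ i j ^ 2) +
        ((((ηu - ηl) • μT + (ηt - ηu) • (Ξ *ᵥ μS)) ⬝ᵥ
          ((ηu - ηl) • μT + (ηt - ηu) • (Ξ *ᵥ μS))) / σ ^ 2)
  rw [Cinv_eq σ ηu hσ.ne' μS, Cinv_eq σ ηl hσ.ne' μT]
  rw [← trace_mul_self_transpose Ξ]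
  simp only [Matrix.fromBlocks_transpose, Matrix.fromBlocks_multiply,
    rV_transpose, cV_transpose, sc_transpose, vecMulVec_transpose,
    Matrix.transpose_add, Matrix.transpose_smul, Matrix.transpose_transpose,
    Matrix.transpose_one,
    rV_mul, mul_cV, rV_mul_cV, cV_mul_rV, sc_mul_sc, sc_mul_rV, cV_mul_sc,
    mul_vecMulVec, vecMulVec_mul, vecMulVec_mul_cV, rV_mul_vecMulVec,
    vecMulVec_mulVec, vecMul_vecMulVec, smul_rV, smul_cV, smul_sc,
    rV_add, cV_add, sc_add,
    Matrix.mul_add, Matrix.add_mul, Matrix.smul_mul, Matrix.mul_smul,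
    Matrix.mul_one, Matrix.one_mul, smul_smul, smul_add, add_smul,
    Matrix.mulVec_add, Matrix.add_mulVec, Matrix.mulVec_smul, smul_mulVec,
    Matrix.one_mulVec, Matrix.vecMul_add, Matrix.add_vecMul, Matrix.smul_vecMul,
    smul_vecMul_assoc, Matrix.vecMul_one, Matrix.mulVec_transpose,
    Matrix.vecMul_transpose,
    dotProduct_add, add_dotProduct, dotProduct_smul, smul_dotProduct,
    trace_fromBlocks', trace_sc, W2SAux.trace_vecMulVec, Matrix.trace_add,
    Matrix.trace_smul, smul_eq_mul,
    rV_mulVec, vecMul_cV, cV_mulVec, vecMul_rV, sc_mulVec, vecMul_sc,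
    trace_cV, trace_rV, Pi.smul_apply, Pi.add_apply]
  simp only [dotProduct_fin_one, dotProduct_comm μT (Ξ *ᵥ μS)]
  field_simp
  ring
end
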